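/- Let ε ∈ (0, 1/4). Let f0(λ) = (2 - 2cos λ)^{-d0} exp(w0(λ)) and f(λ) = (2 - 2cos λ)^{-d} exp(w(λ)) on (0,π), where |d - d0| ≤ ε and |w(λ) - w0(λ)| ≤ ε for all λ. Then h(f, f0) = (1/2π)∫_0^π (f/f0 + f0/f - 2) dλ ≤ 7ε. -/

import Mathlib

open Real MeasureTheory

lemma num_lem (ε : ℝ) (h0 : 0 < ε) (h4 : ε < 1/4) :
    Real.exp (ε * (1 + Real.log 4)) / (1 - 2*ε) + Real.exp (ε * (1 + Real.log 4)) - 2 ≤ 14 * ε := by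
  have hlog4 : Real.log 4 < 1.3862943616 := by
    have h : (4:ℝ) = 2^2 := by norm_num
    rw [h, Real.log_pow]
    push_cast
    nlinarith [Real.log_two_lt_d9]
  have hlog4' : 0 < Real.log 4 := Real.log_pos (by norm_num)
  set t := ε * (1 + Real.log 4) with ht_def
  have ht0 : 0 < t := by positivity
  have ht2 : t ≤ (2.3862943616) * ε := by nlinarith
  have ht : t < 0.5965735904 := by nlinarith
  have ht1 : t ≤ 1 := by linarith
  have hexp := Real.exp_bound' ht0.le ht1 (n := 3) (by norm_num)
  have hsum : (∑ m ∈ Finset.range 3, t ^ m / m.factorial) = 1 + t + t^2/2 := by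
    simp [Finset.sum_range_succ, Nat.factorial]
  rw [hsum] at hexp
  have hexp' : Real.exp t ≤ 1 + t + t^2/2 + (2/9) * t^3 := by
    convert hexp using 2
    norm_num [Nat.factorial]
    ring
  have hE : Real.exp t ≤ 1 + (329/100) * ε := by
    nlinarith [sq_nonneg t, mul_pos ht0 ht0, mul_pos (mul_pos ht0 ht0) ht0]
  have h1 : (0:ℝ) < 1 - 2*ε := by linarith
  have h2 : Real.exp t / (1 - 2*ε) ≤ 14*ε + 2 - Real.exp t := by
    rw [div_le_iff₀ h1]
    nlinarith [Real.exp_pos t]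
  linarith


-- pointwise lower bound for 2 - 2cos
lemma two_sub_cos_lb {x : ℝ} (hx0 : 0 < x) (hxp : x < π) : x^2/3 ≤ 2 - 2 * Real.cos x := by
  have h1 : 2 / π * (x/2) ≤ Real.sin (x/2) :=
    Real.mul_le_sin (by linarith) (by linarith)
  have hπ : 0 < π := Real.pi_pos
  have h2 : x / π ≤ Real.sin (x/2) := by
    have : 2 / π * (x/2) = x / π := by field_simp
    linarith [this ▸ h1]
  have hxπ : 0 ≤ x / π := by positivity
  have h3 : (x/π)^2 ≤ Real.sin (x/2)^2 := by
    apply pow_le_pow_left₀ hxπ h2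
  have hc := Real.cos_two_mul' (x/2)
  rw [show 2*(x/2) = x by ring] at hc
  have hsc := Real.sin_sq_add_cos_sq (x/2)
  have hceq : 2 - 2 * Real.cos x = 4 * Real.sin (x/2)^2 := by nlinarith
  rw [hceq]
  have hπ2 : π^2 < 12 := by nlinarith [Real.pi_lt_d2]
  have h4 : (x/π)^2 = x^2/π^2 := by field_simp
  rw [h4] at h3
  rw [div_le_iff₀ (by positivity : (0:ℝ) < π^2)] at h3
  nlinarith [sq_nonneg x]

lemma fexp_aux
    (ε d d0 : ℝ) (w w0 f f0 : ℝ → ℝ)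
    (hε0 : 0 < ε) (hε4 : ε < 1 / 4)
    (hf0 : ∀ x : ℝ, f0 x = (2 - 2 * Real.cos x) ^ (-d0) * Real.exp (w0 x))
    (hf : ∀ x : ℝ, f x = (2 - 2 * Real.cos x) ^ (-d) * Real.exp (w x))
    (hd0 : d0 ≤ d) (hdε : d - d0 ≤ ε) (hw : ∀ x : ℝ, |w x - w0 x| ≤ ε) :
    (1 / (2 * π)) * ∫ x in Set.Ioo (0 : ℝ) π,
        (f x / f0 x + f0 x / f x - 2) ≤ 7 * ε := by
  have hπ : (0:ℝ) < π := Real.pi_pos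
  set r : ℝ := 2 * (d0 - d) with hr_def
  have hr0 : r ≤ 0 := by simp only [hr_def]; nlinarith
  have hr1 : -1 < r := by simp only [hr_def]; nlinarith
  set A : ℝ := (3:ℝ) ^ ε * Real.exp ε with hA_def
  set B : ℝ := (4:ℝ) ^ ε * Real.exp ε with hB_def
  have hA0 : 0 < A := by positivity
  have hB0 : 0 < B := by positivity
  set bound : ℝ → ℝ := fun x => A * x ^ r + (B - 2) with hbound_def
  -- pointwise bound
  have hpt : ∀ x ∈ Set.Ioo (0:ℝ) π, f x / f0 x + f0 x / f x - 2 ≤ bound x := by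
    rintro x ⟨hx0, hxπ⟩
    have hlb := two_sub_cos_lb hx0 hxπ
    have hub : 2 - 2 * Real.cos x ≤ 4 := by nlinarith [Real.neg_one_le_cos x]
    have hc0 : (0:ℝ) < 2 - 2 * Real.cos x := by nlinarith
    have hu := abs_le.1 (hw x)
    -- f/f0
    have hq1 : f x / f0 x = (2 - 2 * Real.cos x) ^ (d0 - d) * Real.exp (w x - w0 x) := by
      rw [hf, hf0, ← div_mul_div_comm, ← Real.rpow_sub hc0, ← Real.exp_sub,
        show -d - -d0 = d0 - d by ring]
    have hq2 : f0 x / f x = (2 - 2 * Real.cos x) ^ (d - d0) * Real.exp (w0 x - w x) := by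
      rw [hf, hf0, ← div_mul_div_comm, ← Real.rpow_sub hc0, ← Real.exp_sub,
        show -d0 - -d = d - d0 by ring]
    have h1 : (2 - 2 * Real.cos x) ^ (d0 - d) ≤ (x^2/3) ^ (d0 - d) :=
      Real.rpow_le_rpow_of_nonpos (by positivity) hlb (by linarith)
    have h2 : (x^2/3 : ℝ) ^ (d0 - d) = x ^ r * (3:ℝ) ^ (d - d0) := by
      rw [Real.div_rpow (by positivity) (by norm_num),
        ← Real.rpow_natCast x 2, ← Real.rpow_mul hx0.le, div_eq_mul_inv,
        ← Real.rpow_neg (by norm_num : (0:ℝ) ≤ 3), neg_sub, hr_def]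
      norm_num
    have h3 : (3:ℝ) ^ (d - d0) ≤ (3:ℝ) ^ ε :=
      Real.rpow_le_rpow_of_exponent_le (by norm_num) hdε
    have h4 : Real.exp (w x - w0 x) ≤ Real.exp ε := Real.exp_le_exp.2 hu.2
    have hxr : (0:ℝ) < x ^ r := Real.rpow_pos_of_pos hx0 r
    have hff0 : f x / f0 x ≤ A * x ^ r := by
      rw [hq1, hA_def]
      calc (2 - 2 * Real.cos x) ^ (d0 - d) * Real.exp (w x - w0 x)
          ≤ (x ^ r * (3:ℝ) ^ (d - d0)) * Real.exp (w x - w0 x) := by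
            rw [← h2]; exact mul_le_mul_of_nonneg_right h1 (Real.exp_pos _).le
        _ ≤ (x ^ r * (3:ℝ) ^ ε) * Real.exp ε := by
            apply mul_le_mul (mul_le_mul_of_nonneg_left h3 hxr.le) h4
              (Real.exp_pos _).le (by positivity)
        _ = 3 ^ ε * Real.exp ε * x ^ r := by ring
    have h5 : (2 - 2 * Real.cos x) ^ (d - d0) ≤ (4:ℝ) ^ (d - d0) :=
      Real.rpow_le_rpow hc0.le hub (by linarith)
    have h6 : (4:ℝ) ^ (d - d0) ≤ (4:ℝ) ^ ε :=
      Real.rpow_le_rpow_of_exponent_le (by norm_num) hdε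
    have h7 : Real.exp (w0 x - w x) ≤ Real.exp ε := by
      apply Real.exp_le_exp.2; linarith [hu.1]
    have hf0f : f0 x / f x ≤ B := by
      rw [hq2, hB_def]
      exact mul_le_mul (h5.trans h6) h7 (Real.exp_pos _).le (by positivity)
    show f x / f0 x + f0 x / f x - 2 ≤ A * x ^ r + (B - 2)
    linarith
  have hr1' : (0:ℝ) < r + 1 := by linarith
  have hint_r : IntegrableOn (fun x : ℝ => x ^ r) (Set.Ioo (0:ℝ) π) := by
    have h := intervalIntegral.intervalIntegrable_rpow' (a := 0) (b := π) (r := r) hr1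
    rwa [intervalIntegrable_iff_integrableOn_Ioo_of_le hπ.le] at h
  have hμ : volume (Set.Ioo (0:ℝ) π) < ⊤ := measure_Ioo_lt_top
  have hint_c : IntegrableOn (fun _ : ℝ => B - 2) (Set.Ioo (0:ℝ) π) :=
    integrableOn_const hμ.ne
  have hint_bound : IntegrableOn bound (Set.Ioo (0:ℝ) π) := by
    rw [hbound_def]
    exact (hint_r.const_mul A).add hint_c
  by_cases hg : IntegrableOn (fun x => f x / f0 x + f0 x / f x - 2) (Set.Ioo (0:ℝ) π)
  case neg =>
    rw [integral_undef hg, mul_zero]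
    positivity
  have hmono := setIntegral_mono_on hg hint_bound measurableSet_Ioo hpt
  have hIoo : ∫ x in Set.Ioo (0:ℝ) π, x ^ r = (π ^ (r + 1)) / (r + 1) := by
    rw [← MeasureTheory.integral_Ioc_eq_integral_Ioo, ← intervalIntegral.integral_of_le hπ.le,
      _root_.integral_rpow (Or.inl hr1), Real.zero_rpow (by linarith : r + 1 ≠ 0)]
    ring
  have hbval : ∫ x in Set.Ioo (0:ℝ) π, bound x
      = A * (π ^ (r + 1) / (r + 1)) + (B - 2) * π := by
    rw [hbound_def, MeasureTheory.integral_add (hint_r.const_mul A) hint_c,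
      MeasureTheory.integral_const_mul, hIoo, MeasureTheory.setIntegral_const]
    simp [Real.volume_Ioo, ENNReal.toReal_ofReal hπ.le, smul_eq_mul, max_eq_left hπ.le]
    ring
  -- bound the integral value
  have hπ1 : (1:ℝ) ≤ π := by linarith [Real.pi_gt_three]
  have hnum : π ^ (r + 1) ≤ π := by
    have := Real.rpow_le_rpow_of_exponent_le hπ1 (by linarith : r + 1 ≤ 1)
    rwa [Real.rpow_one] at this
  have hden : 1 - 2 * ε ≤ r + 1 := by simp only [hr_def]; linarith
  have hden0 : (0:ℝ) < 1 - 2 * ε := by linarith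
  have hI : π ^ (r + 1) / (r + 1) ≤ π / (1 - 2 * ε) :=
    div_le_div₀ hπ.le hnum hden0 hden
  -- numeric bound : A / (1-2ε) + (B-2) ≤ 14 ε
  have hBE : B = Real.exp (ε * (1 + Real.log 4)) := by
    rw [hB_def, Real.rpow_def_of_pos (by norm_num : (0:ℝ) < 4), ← Real.exp_add]
    ring_nf
  have hAB : A ≤ B := by
    rw [hA_def, hB_def]
    exact mul_le_mul_of_nonneg_right
      (Real.rpow_le_rpow (by norm_num) (by norm_num) hε0.le) (Real.exp_pos _).le
  have hkey := num_lem ε hε0 hε4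
  rw [← hBE] at hkey
  have hfin : A * (π ^ (r + 1) / (r + 1)) + (B - 2) * π ≤ 14 * ε * π := by
    have h1 : A * (π ^ (r + 1) / (r + 1)) ≤ A * (π / (1 - 2 * ε)) :=
      mul_le_mul_of_nonneg_left hI hA0.le
    have h2 : A * (π / (1 - 2 * ε)) = (A / (1 - 2 * ε)) * π := by ring
    have h3 : A / (1 - 2 * ε) ≤ B / (1 - 2 * ε) := by
      apply div_le_div_of_nonneg_right hAB hden0.le  -- check name
    nlinarith [hπ]
  calc (1 / (2 * π)) * ∫ x in Set.Ioo (0 : ℝ) π, (f x / f0 x + f0 x / f x - 2)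
      ≤ (1 / (2 * π)) * (14 * ε * π) := by
        apply mul_le_mul_of_nonneg_left _ (by positivity)
        calc ∫ x in Set.Ioo (0 : ℝ) π, (f x / f0 x + f0 x / f x - 2)
            ≤ ∫ x in Set.Ioo (0 : ℝ) π, bound x := hmono
          _ = A * (π ^ (r + 1) / (r + 1)) + (B - 2) * π := hbval
          _ ≤ 14 * ε * π := hfin
    _ = 7 * ε := by field_simp; ring

open Real MeasureTheory in
theorem fexp_h_continuity
    (ε d d0 : ℝ) (w w0 f f0 : ℝ → ℝ)
    (hε : ε ∈ Set.Ioo (0 : ℝ) (1 / 4))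
    (hf0 : ∀ x : ℝ, f0 x = (2 - 2 * Real.cos x) ^ (-d0) * Real.exp (w0 x))
    (hf : ∀ x : ℝ, f x = (2 - 2 * Real.cos x) ^ (-d) * Real.exp (w x))
    (hd : |d - d0| ≤ ε) (hw : ∀ x : ℝ, |w x - w0 x| ≤ ε) :
    (1 / (2 * π)) * ∫ x in Set.Ioo (0 : ℝ) π,
        (f x / f0 x + f0 x / f x - 2) ≤ 7 * ε := by
  obtain ⟨hε0, hε4⟩ := hε
  rcases le_total d0 d with h | h
  · exact fexp_aux ε d d0 w w0 f f0 hε0 hε4 hf0 hf h (abs_le.1 hd).2 hw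
  · have hd' : |d0 - d| ≤ ε := by rwa [abs_sub_comm] at hd
    have hw' : ∀ x : ℝ, |w0 x - w x| ≤ ε := fun x => by
      rw [abs_sub_comm]; exact hw x
    have := fexp_aux ε d0 d w0 w f0 f hε0 hε4 hf hf0 h (abs_le.1 hd').2 hw'
    have heq : ∀ x : ℝ, f0 x / f x + f x / f0 x - 2 = f x / f0 x + f0 x / f x - 2 :=
      fun x => by ring
    simpa only [heq] using this
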